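/- Let X = V(f) ⊂ P^2 be a smooth conic (n = d = 2). Then ρ(O_X) = Σ_{r=0}^2 Σ_i h^i(P^2, i_*O_X ⊗ Ω^r_{P^2}(r)) = 2, which is strictly less than 2^{⌊2/2⌋+1} = 4. -/
import Mathlib


/-- `IsBottCohomology n h` says that `h q p ℓ` is the dimension of the sheaf cohomology
`H^q(ℙⁿ_k, Ω^p_{ℙⁿ}(ℓ))` of the twisted sheaves of differential `p`-forms on projective
`n`-space, as given by the Bott formula (which characterizes these dimensions):
`h^q(Ωᵖ(ℓ)) = C(ℓ+n−p, ℓ)·C(ℓ−1, p)` if `q = 0, ℓ > p`; `1` if `ℓ = 0, q = p`;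
`C(p−ℓ, −ℓ)·C(−ℓ−1, n−p)` if `q = n, ℓ < p − n`; and `0` otherwise. -/
def IsBottCohomology (n : ℕ) (h : ℕ → ℕ → ℤ → ℕ) : Prop :=
  ∀ q p : ℕ, p ≤ n → ∀ ℓ : ℤ,
    h q p ℓ =
      if q = 0 ∧ (p : ℤ) < ℓ then
        Nat.choose (ℓ + n - p).toNat ℓ.toNat * Nat.choose (ℓ - 1).toNat p
      else if ℓ = 0 ∧ q = p then 1
      else if q = n ∧ ℓ < (p : ℤ) - n then
        Nat.choose ((p : ℤ) - ℓ).toNat (-ℓ).toNat * Nat.choose (-ℓ - 1).toNat (n - p)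
      else 0

/-- The long exact cohomology sequence, at the level of dimensions: a sequence of
finite-dimensional spaces `0 → D 0 → D 1 → D 2 → ⋯` is exact iff there are ranks
`rk j` (of the maps) with `rk 0 = 0` and `dim (D j) = rk j + rk (j+1)` for all `j`. -/
def ExactDims (D : ℕ → ℕ) : Prop :=
  ∃ rk : ℕ → ℕ, rk 0 = 0 ∧ ∀ j, D j = rk j + rk (j + 1)

/-- Let `X = V(f) ⊂ ℙ²` be a smooth conic (`n = d = 2`), and let
`hX q r = h^q(ℙ², i_*O_X ⊗ Ω^r_{ℙ²}(r))`.  Given the Bott formula for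
`h q p ℓ = h^q(ℙ², Ωᵖ(ℓ))` and the long exact cohomology sequences induced by
`0 → Ω^r(r−2) → Ω^r(r) → i_*O_X ⊗ Ω^r(r) → 0`, one has
`ρ(O_X) = ∑_{r=0}^2 ∑_q hX q r = 2 < 2^{⌊2/2⌋+1} = 4`. -/
theorem rho_structure_sheaf_conic
    (h : ℕ → ℕ → ℤ → ℕ) (hBott : IsBottCohomology 2 h)
    (hX : ℕ → ℕ → ℕ)
    (hLES : ∀ r ≤ 2, ExactDims fun m =>
      if m % 3 = 0 then h (m / 3) r ((r : ℤ) - 2)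
      else if m % 3 = 1 then h (m / 3) r (r : ℤ)
      else hX (m / 3) r) :
    ∑ r ∈ Finset.range 3, ∑ q ∈ Finset.range 3, hX q r = 2 ∧
    (2 : ℕ) < 2 ^ (2 / 2 + 1) := by
  refine ⟨?_, by norm_num⟩
  -- Bott values
  have b00m : h 0 0 (-2) = 0 := by rw [hBott 0 0 (by norm_num) (-2)]; norm_num
  have b10m : h 1 0 (-2) = 0 := by rw [hBott 1 0 (by norm_num) (-2)]; norm_num
  have b20m : h 2 0 (-2) = 0 := by rw [hBott 2 0 (by norm_num) (-2)]; norm_num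
  have b30m : h 3 0 (-2) = 0 := by rw [hBott 3 0 (by norm_num) (-2)]; norm_num
  have b000 : h 0 0 0 = 1 := by rw [hBott 0 0 (by norm_num) 0]; norm_num
  have b100 : h 1 0 0 = 0 := by rw [hBott 1 0 (by norm_num) 0]; norm_num
  have b200 : h 2 0 0 = 0 := by rw [hBott 2 0 (by norm_num) 0]; norm_num
  have b300 : h 3 0 0 = 0 := by rw [hBott 3 0 (by norm_num) 0]; norm_num
  have c0 : h 0 1 (-1) = 0 := by rw [hBott 0 1 (by norm_num) (-1)]; norm_num
  have c1 : h 1 1 (-1) = 0 := by rw [hBott 1 1 (by norm_num) (-1)]; norm_num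
  have c2 : h 2 1 (-1) = 0 := by rw [hBott 2 1 (by norm_num) (-1)]; norm_num
  have c3 : h 3 1 (-1) = 0 := by rw [hBott 3 1 (by norm_num) (-1)]; norm_num
  have c0' : h 0 1 1 = 0 := by rw [hBott 0 1 (by norm_num) 1]; norm_num
  have c1' : h 1 1 1 = 0 := by rw [hBott 1 1 (by norm_num) 1]; norm_num
  have c2' : h 2 1 1 = 0 := by rw [hBott 2 1 (by norm_num) 1]; norm_num
  have d0 : h 0 2 0 = 0 := by rw [hBott 0 2 (by norm_num) 0]; norm_num
  have d1 : h 1 2 0 = 0 := by rw [hBott 1 2 (by norm_num) 0]; norm_num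
  have d2 : h 2 2 0 = 1 := by rw [hBott 2 2 (by norm_num) 0]; norm_num
  have d3 : h 3 2 0 = 0 := by rw [hBott 3 2 (by norm_num) 0]; norm_num
  have e0 : h 0 2 2 = 0 := by rw [hBott 0 2 (by norm_num) 2]; norm_num
  have e1 : h 1 2 2 = 0 := by rw [hBott 1 2 (by norm_num) 2]; norm_num
  have e2 : h 2 2 2 = 0 := by rw [hBott 2 2 (by norm_num) 2]; norm_num
  obtain ⟨A, A0, hA⟩ := hLES 0 (by norm_num)
  obtain ⟨B, B0, hB⟩ := hLES 1 (by norm_num)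
  obtain ⟨C, C0, hC⟩ := hLES 2 (by norm_num)
  have A1 := hA 0; have A2 := hA 1; have A3 := hA 2; have A4 := hA 3
  have A5 := hA 4; have A6 := hA 5; have A7 := hA 6; have A8 := hA 7
  have A9 := hA 8; have A10 := hA 9
  have B1 := hB 0; have B2 := hB 1; have B3 := hB 2; have B4 := hB 3
  have B5 := hB 4; have B6 := hB 5; have B7 := hB 6; have B8 := hB 7
  have B9 := hB 8; have B10 := hB 9
  have C1 := hC 0; have C2 := hC 1; have C3 := hC 2; have C4 := hC 3
  have C5 := hC 4; have C6 := hC 5; have C7 := hC 6; have C8 := hC 7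
  have C9 := hC 8; have C10 := hC 9
  simp only [Finset.sum_range_succ, Finset.sum_range_zero] at *
  norm_num at A1 A2 A3 A4 A5 A6 A7 A8 A9 A10 B1 B2 B3 B4 B5 B6 B7 B8 B9 B10 C1 C2 C3 C4 C5 C6 C7 C8 C9 C10
  omega
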